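/- On the interval [0, π/(2f)), the functions u(x,y,t) = -(f x + τ y) tan(ft), v(x,y,t) = -f x - τ y, h(x,y,t) = h₀ e^{τt} sec(ft) satisfy the rotating shallow water equations over a flat bottom with linear friction coefficient τ, Coriolis parameter f, and Froude number F. -/

import Mathlib

noncomputable def u6 (f τ : ℝ) (x y t : ℝ) : ℝ := -(f * x + τ * y) * Real.tan (f * t)
noncomputable def v6 (f τ : ℝ) (x y t : ℝ) : ℝ := -f * x - τ * y
noncomputable def h6 (f τ h0 : ℝ) (x y t : ℝ) : ℝ := h0 * Real.exp (τ * t) / Real.cos (f * t)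

theorem stmt_6 (f τ F h0 : ℝ) (hf : 0 < f) (hτ : 0 ≤ τ) (hF : F ≠ 0) :
    ∀ x y : ℝ, ∀ t ∈ Set.Ico (0 : ℝ) (Real.pi / (2 * f)),
      (deriv (fun s => u6 f τ x y s) t
        + u6 f τ x y t * deriv (fun s => u6 f τ s y t) x
        + v6 f τ x y t * deriv (fun s => u6 f τ x s t) y
        + (1 / F ^ 2) * deriv (fun s => h6 f τ h0 s y t) x
        - f * v6 f τ x y t + τ * u6 f τ x y t = 0) ∧
      (deriv (fun s => v6 f τ x y s) t
        + u6 f τ x y t * deriv (fun s => v6 f τ s y t) x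
        + v6 f τ x y t * deriv (fun s => v6 f τ x s t) y
        + (1 / F ^ 2) * deriv (fun s => h6 f τ h0 x s t) y
        + f * u6 f τ x y t + τ * v6 f τ x y t = 0) ∧
      (deriv (fun s => h6 f τ h0 x y s) t
        + deriv (fun s => u6 f τ s y t * h6 f τ h0 s y t) x
        + deriv (fun s => v6 f τ x s t * h6 f τ h0 x s t) y = 0) := by
  intro x y t ht
  obtain ⟨ht0, ht1⟩ := ht
  have hft : f * t < Real.pi / 2 := by
    have h2 := (lt_div_iff₀ (by positivity : (0:ℝ) < 2*f)).mp ht1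
    nlinarith
  have hmul : HasDerivAt (fun s : ℝ => f * s) f t := by
    simpa using (hasDerivAt_id t).const_mul f
  have hcos : Real.cos (f * t) ≠ 0 := by
    have : 0 < Real.cos (f * t) := Real.cos_pos_of_mem_Ioo
      ⟨by nlinarith [Real.pi_pos, mul_nonneg hf.le ht0], hft⟩
    exact this.ne'
  -- derivatives
  have hdu_t : deriv (fun s => u6 f τ x y s) t
      = -(f * x + τ * y) * (f / Real.cos (f*t) ^ 2) := by
    have h1 : HasDerivAt (fun s : ℝ => Real.tan (f * s)) (1 / Real.cos (f*t) ^ 2 * f) t :=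
      (Real.hasDerivAt_tan hcos).comp t hmul
    have := (h1.const_mul (-(f * x + τ * y))).deriv
    simpa [u6, mul_comm, mul_left_comm, mul_assoc, div_eq_mul_inv] using this
  have hdu_x : deriv (fun s => u6 f τ s y t) x = -f * Real.tan (f*t) := by
    have h1 : HasDerivAt (fun s : ℝ => -(f * s + τ * y) * Real.tan (f*t))
        (-f * Real.tan (f*t)) x := by
      simpa using ((((hasDerivAt_id x).const_mul f).add_const (τ*y)).neg.mul_const
        (Real.tan (f*t)))
    simpa [u6] using h1.deriv
  have hdu_y : deriv (fun s => u6 f τ x s t) y = -τ * Real.tan (f*t) := by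
    have h1 : HasDerivAt (fun s : ℝ => -(f * x + τ * s) * Real.tan (f*t))
        (-τ * Real.tan (f*t)) y := by
      simpa using ((((hasDerivAt_id y).const_mul τ).const_add (f*x)).neg.mul_const
        (Real.tan (f*t)))
    simpa [u6] using h1.deriv
  have hdv_t : deriv (fun s => v6 f τ x y s) t = 0 := by simp [v6]
  have hdv_x : deriv (fun s => v6 f τ s y t) x = -f := by
    have h1 : HasDerivAt (fun s : ℝ => -f * s - τ * y) (-f) x := by
      simpa using (((hasDerivAt_id x).const_mul (-f)).sub_const (τ*y))
    simpa [v6] using h1.deriv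
  have hdv_y : deriv (fun s => v6 f τ x s t) y = -τ := by
    have h1 : HasDerivAt (fun s : ℝ => -f * x - τ * s) (-τ) y := by
      simpa using (((hasDerivAt_id y).const_mul τ).const_sub (-f*x))
    simpa [v6] using h1.deriv
  have hdh_x : deriv (fun s => h6 f τ h0 s y t) x = 0 := by simp [h6]
  have hdh_y : deriv (fun s => h6 f τ h0 x s t) y = 0 := by simp [h6]
  have hexp : HasDerivAt (fun s : ℝ => h0 * Real.exp (τ * s))
      (h0 * Real.exp (τ * t) * τ) t := by
    have := (Real.hasDerivAt_exp (τ*t)).comp t ((hasDerivAt_id t).const_mul τ)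
    simpa [mul_comm, mul_left_comm, mul_assoc] using this.const_mul h0
  have hcosd : HasDerivAt (fun s : ℝ => Real.cos (f * s)) (-Real.sin (f*t) * f) t :=
    (Real.hasDerivAt_cos (f*t)).comp t hmul
  have hht : HasDerivAt (fun s => h6 f τ h0 x y s)
      ((h0 * Real.exp (τ * t) * τ * Real.cos (f*t)
        - h0 * Real.exp (τ * t) * (-Real.sin (f*t) * f)) / Real.cos (f*t) ^ 2) t := by
    exact hexp.div hcosd hcos
  have hdh_t := hht.deriv
  have hdm_x : deriv (fun s => u6 f τ s y t * h6 f τ h0 s y t) x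
      = -f * Real.tan (f*t) * (h0 * Real.exp (τ * t) / Real.cos (f * t)) := by
    have h1 : HasDerivAt (fun s : ℝ => -(f * s + τ * y) * Real.tan (f*t)
        * (h0 * Real.exp (τ * t) / Real.cos (f * t)))
        (-f * Real.tan (f*t) * (h0 * Real.exp (τ * t) / Real.cos (f * t))) x := by
      simpa using (((((hasDerivAt_id x).const_mul f).add_const (τ*y)).neg.mul_const
        (Real.tan (f*t))).mul_const (h0 * Real.exp (τ * t) / Real.cos (f * t)))
    simpa [u6, h6] using h1.deriv
  have hdm_y : deriv (fun s => v6 f τ x s t * h6 f τ h0 x s t) y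
      = -τ * (h0 * Real.exp (τ * t) / Real.cos (f * t)) := by
    have h1 : HasDerivAt (fun s : ℝ => (-f * x - τ * s)
        * (h0 * Real.exp (τ * t) / Real.cos (f * t)))
        (-τ * (h0 * Real.exp (τ * t) / Real.cos (f * t))) y := by
      simpa using ((((hasDerivAt_id y).const_mul τ).const_sub (-f*x)).mul_const
        (h0 * Real.exp (τ * t) / Real.cos (f * t)))
    simpa [v6, h6] using h1.deriv
  have hsc := Real.sin_sq_add_cos_sq (f*t)
  refine ⟨?_, ?_, ?_⟩
  · rw [hdu_t, hdu_x, hdu_y, hdh_x]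
    simp only [u6, v6, Real.tan_eq_sin_div_cos]
    field_simp
    linear_combination (f*τ*y + f^2*x) * F^2 * hsc
  · rw [hdv_t, hdv_x, hdv_y, hdh_y]
    simp only [u6, v6, Real.tan_eq_sin_div_cos]
    field_simp
    ring
  · rw [hdh_t, hdm_x, hdm_y]
    simp only [Real.tan_eq_sin_div_cos]
    field_simp
    ring
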